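/- Let x₀ ≠ 0 with β̲_A(x₀) > 0 and x₁ with β̄_A(x₁) < 0 (or x₁ = 0). Then β̲_A(x₀ + x₁) ≥ β̲_A(x₀). -/

import Mathlib

open Filter Topology

noncomputable section

abbrev Euc (d : ℕ) := EuclideanSpace ℝ (Fin d)

/-- forward product `A(m+k-1) ⋯ A(m)` -/
def fwd {d : ℕ} (A : ℕ → (Euc d →L[ℝ] Euc d)) (m : ℕ) : ℕ → (Euc d →L[ℝ] Euc d)
  | 0 => 1
  | k + 1 => A (m + k) * fwd A m k

/-- backward product `Ainv(n) ⋯ Ainv(n+k-1)` -/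
def bwd {d : ℕ} (Ainv : ℕ → (Euc d →L[ℝ] Euc d)) (n : ℕ) : ℕ → (Euc d →L[ℝ] Euc d)
  | 0 => 1
  | k + 1 => bwd Ainv n k * Ainv (n + k)

/-- transition matrix Φ_A(n,m) -/
def Phi {d : ℕ} (A Ainv : ℕ → (Euc d →L[ℝ] Euc d)) (n m : ℕ) : Euc d →L[ℝ] Euc d :=
  if m ≤ n then fwd A m (n - m) else bwd Ainv n (m - n)

/-- A is a bounded sequence of invertible maps with bounded inverse sequence Ainv -/
def IsLyapunov {d : ℕ} (A Ainv : ℕ → (Euc d →L[ℝ] Euc d)) : Prop :=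
  (∀ n, A n * Ainv n = 1) ∧ (∀ n, Ainv n * A n = 1) ∧
    BddAbove (Set.range fun n => ‖A n‖) ∧ BddAbove (Set.range fun n => ‖Ainv n‖)

/-- `‖A‖_∞ = sup_n ‖A(n)‖` -/
def supNorm {d : ℕ} (A : ℕ → (Euc d →L[ℝ] Euc d)) : ℝ := ⨆ n, ‖A n‖

/-- solution `x(n,x₀) = Φ_A(n,0) x₀` -/
def sol {d : ℕ} (A : ℕ → (Euc d →L[ℝ] Euc d)) (n : ℕ) (x₀ : Euc d) : Euc d :=
  fwd A 0 n x₀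

/-- `λ(n,m) = (1/(n-m)) ln (‖x(n,x₀)‖ / ‖x(m,x₀)‖)` -/
def lam {d : ℕ} (A : ℕ → (Euc d →L[ℝ] Euc d)) (n m : ℕ) (x₀ : Euc d) : ℝ :=
  Real.log (‖sol A n x₀‖ / ‖sol A m x₀‖) / ((n : ℝ) - (m : ℝ))

/-- upper Bohl exponent of a subspace -/
def upperBohl {d : ℕ} (A : ℕ → (Euc d →L[ℝ] Euc d)) (L : Set (Euc d)) : ℝ :=
  ⨅ N : ℕ, sSup {r | ∃ n m : ℕ, ∃ x₀ : Euc d,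
    N < n - m ∧ x₀ ∈ L ∧ x₀ ≠ 0 ∧ r = lam A n m x₀}

/-- lower Bohl exponent of a subspace -/
def lowerBohl {d : ℕ} (A : ℕ → (Euc d →L[ℝ] Euc d)) (L : Set (Euc d)) : ℝ :=
  ⨆ N : ℕ, sInf {r | ∃ n m : ℕ, ∃ x₀ : Euc d,
    N < n - m ∧ x₀ ∈ L ∧ x₀ ≠ 0 ∧ r = lam A n m x₀}

/-- upper Bohl exponent of a vector -/
def upperBohlVec {d : ℕ} (A : ℕ → (Euc d →L[ℝ] Euc d)) (x₀ : Euc d) : ℝ :=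
  ⨅ N : ℕ, sSup {r | ∃ n m : ℕ, N < n - m ∧ r = lam A n m x₀}

/-- lower Bohl exponent of a vector -/
def lowerBohlVec {d : ℕ} (A : ℕ → (Euc d →L[ℝ] Euc d)) (x₀ : Euc d) : ℝ :=
  ⨆ N : ℕ, sInf {r | ∃ n m : ℕ, N < n - m ∧ r = lam A n m x₀}

/-- Bohl spectrum -/
def bohlSpectrum {d : ℕ} (A : ℕ → (Euc d →L[ℝ] Euc d)) : Set ℝ :=
  {γ | ∃ x₀ : Euc d, x₀ ≠ 0 ∧ γ ∈ Set.Icc (lowerBohlVec A x₀) (upperBohlVec A x₀)}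

/-- the γ-shifted system `e^{-γ} A` -/
def shift {d : ℕ} (A : ℕ → (Euc d →L[ℝ] Euc d)) (γ : ℝ) : ℕ → (Euc d →L[ℝ] Euc d) :=
  fun n => Real.exp (-γ) • A n

/-- Bohl dichotomy on a given pair of subspaces -/
def HasBohlDichotomyOn {d : ℕ} (A : ℕ → (Euc d →L[ℝ] Euc d))
    (L₁ L₂ : Submodule ℝ (Euc d)) : Prop :=
  ∃ α : ℝ, 0 < α ∧ ∃ C₁ C₂ : Euc d → ℝ, (∀ x, 0 < C₁ x) ∧ (∀ x, 0 < C₂ x) ∧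
    (∀ x₀ ∈ L₁, ∀ m n : ℕ, m ≤ n →
      ‖sol A n x₀‖ ≤ C₁ x₀ * Real.exp (-α * ((n : ℝ) - (m : ℝ))) * ‖sol A m x₀‖) ∧
    (∀ x₀ ∈ L₂, ∀ m n : ℕ, m ≤ n →
      C₂ x₀ * Real.exp (α * ((n : ℝ) - (m : ℝ))) * ‖sol A m x₀‖ ≤ ‖sol A n x₀‖)

/-- Bohl dichotomy -/
def HasBohlDichotomy {d : ℕ} (A : ℕ → (Euc d →L[ℝ] Euc d)) : Prop :=
  ∃ L₁ L₂ : Submodule ℝ (Euc d), IsCompl L₁ L₂ ∧ HasBohlDichotomyOn A L₁ L₂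

/-- Bohl dichotomy spectrum -/
def bdSpectrum {d : ℕ} (A : ℕ → (Euc d →L[ℝ] Euc d)) : Set ℝ :=
  {γ | ¬ HasBohlDichotomy (shift A γ)}

namespace BohlAux

variable {d : ℕ} {A Ainv : ℕ → (Euc d →L[ℝ] Euc d)}

lemma sol_succ (A : ℕ → (Euc d →L[ℝ] Euc d)) (n : ℕ) (x : Euc d) :
    sol A (n+1) x = A n (sol A n x) := by
  show (A (0+n) * fwd A 0 n) x = _
  simp [sol, ContinuousLinearMap.mul_apply]

/-- the common bound constant -/
def cst (A Ainv : ℕ → (Euc d →L[ℝ] Euc d)) : ℝ := max (max (supNorm A) (supNorm Ainv)) 1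

lemma one_le_cst : 1 ≤ cst A Ainv := le_max_right _ _

lemma cst_pos : (0:ℝ) < cst A Ainv := lt_of_lt_of_le one_pos one_le_cst

lemma norm_A_le (hA : IsLyapunov A Ainv) (n : ℕ) : ‖A n‖ ≤ cst A Ainv :=
  le_trans (le_ciSup hA.2.2.1 n) (le_trans (le_max_left _ _) (le_max_left _ _))

lemma norm_Ainv_le (hA : IsLyapunov A Ainv) (n : ℕ) : ‖Ainv n‖ ≤ cst A Ainv :=
  le_trans (le_ciSup hA.2.2.2 n) (le_trans (le_max_right _ _) (le_max_left _ _))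

lemma step_up (hA : IsLyapunov A Ainv) (n : ℕ) (x : Euc d) :
    ‖sol A (n+1) x‖ ≤ cst A Ainv * ‖sol A n x‖ := by
  rw [sol_succ]
  exact le_trans ((A n).le_opNorm _) (by
    have := norm_A_le hA n
    exact mul_le_mul_of_nonneg_right this (norm_nonneg _))

lemma step_down (hA : IsLyapunov A Ainv) (n : ℕ) (x : Euc d) :
    ‖sol A n x‖ ≤ cst A Ainv * ‖sol A (n+1) x‖ := by
  have h : sol A n x = Ainv n (sol A (n+1) x) := by
    rw [sol_succ]
    have := congrArg (fun T : Euc d →L[ℝ] Euc d => T (sol A n x)) (hA.2.1 n)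
    simpa [ContinuousLinearMap.mul_apply] using this.symm
  rw [h]
  exact le_trans ((Ainv n).le_opNorm _)
    (mul_le_mul_of_nonneg_right (norm_Ainv_le hA n) (norm_nonneg _))

lemma norm_sol_le (hA : IsLyapunov A Ainv) (m k : ℕ) (x : Euc d) :
    ‖sol A (m+k) x‖ ≤ (cst A Ainv)^k * ‖sol A m x‖ := by
  induction k with
  | zero => simp
  | succ k ih =>
    calc ‖sol A (m+(k+1)) x‖ = ‖sol A ((m+k)+1) x‖ := by ring_nf
      _ ≤ cst A Ainv * ‖sol A (m+k) x‖ := step_up hA _ _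
      _ ≤ cst A Ainv * ((cst A Ainv)^k * ‖sol A m x‖) :=
          mul_le_mul_of_nonneg_left ih (le_of_lt cst_pos)
      _ = (cst A Ainv)^(k+1) * ‖sol A m x‖ := by ring

lemma norm_sol_ge (hA : IsLyapunov A Ainv) (m k : ℕ) (x : Euc d) :
    ‖sol A m x‖ ≤ (cst A Ainv)^k * ‖sol A (m+k) x‖ := by
  induction k with
  | zero => simp
  | succ k ih =>
    calc ‖sol A m x‖ ≤ (cst A Ainv)^k * ‖sol A (m+k) x‖ := ih
      _ ≤ (cst A Ainv)^k * (cst A Ainv * ‖sol A ((m+k)+1) x‖) :=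
          mul_le_mul_of_nonneg_left (step_down hA _ _) (pow_nonneg (le_of_lt cst_pos) _)
      _ = (cst A Ainv)^(k+1) * ‖sol A (m+(k+1)) x‖ := by ring_nf

lemma norm_sol_pos (hA : IsLyapunov A Ainv) (n : ℕ) {x : Euc d} (hx : x ≠ 0) :
    0 < ‖sol A n x‖ := by
  by_contra h
  push_neg at h
  have h0 : ‖sol A n x‖ = 0 := le_antisymm h (norm_nonneg _)
  have := norm_sol_ge hA 0 n x
  rw [Nat.zero_add] at this
  rw [h0, mul_zero] at this
  exact hx (norm_le_zero_iff.mp (by simpa [sol, fwd] using this))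

lemma cast_sub_pos {n m : ℕ} (hmn : m < n) : (0:ℝ) < (n:ℝ) - (m:ℝ) := by
  have : (m:ℝ) < (n:ℝ) := by exact_mod_cast hmn
  linarith

lemma sol_norm_eq (hA : IsLyapunov A Ainv) {x : Euc d} (hx : x ≠ 0) {n m : ℕ} (hmn : m < n) :
    ‖sol A n x‖ = Real.exp (lam A n m x * ((n:ℝ)-(m:ℝ))) * ‖sol A m x‖ := by
  have hm := norm_sol_pos hA m hx
  have hn := norm_sol_pos hA n hx
  have hk := cast_sub_pos hmn
  have h1 : lam A n m x * ((n:ℝ)-(m:ℝ)) = Real.log (‖sol A n x‖/‖sol A m x‖) :=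
    div_mul_cancel₀ _ hk.ne'
  rw [h1, Real.exp_log (div_pos hn hm), div_mul_cancel₀ _ hm.ne']

lemma lam_ge_of (hA : IsLyapunov A Ainv) {x : Euc d} (hx : x ≠ 0) {n m : ℕ} (hmn : m < n)
    {c : ℝ} (h : Real.exp (c * ((n:ℝ)-(m:ℝ))) * ‖sol A m x‖ ≤ ‖sol A n x‖) :
    c ≤ lam A n m x := by
  have hm := norm_sol_pos hA m hx
  have hk := cast_sub_pos hmn
  rw [sol_norm_eq hA hx hmn (m := m)] at h
  have h2 := le_of_mul_le_mul_right h hm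
  have h3 := Real.exp_le_exp.mp h2
  exact le_of_mul_le_mul_right (by linarith [h3]) hk

lemma lam_le_of (hA : IsLyapunov A Ainv) {x : Euc d} (hx : x ≠ 0) {n m : ℕ} (hmn : m < n)
    {c : ℝ} (h : ‖sol A n x‖ ≤ Real.exp (c * ((n:ℝ)-(m:ℝ))) * ‖sol A m x‖) :
    lam A n m x ≤ c := by
  have hm := norm_sol_pos hA m hx
  have hk := cast_sub_pos hmn
  rw [sol_norm_eq hA hx hmn (m := m)] at h
  have h2 := le_of_mul_le_mul_right h hm
  have h3 := Real.exp_le_exp.mp h2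
  exact le_of_mul_le_mul_right (by linarith [h3]) hk

lemma sol_ge_of_lam (hA : IsLyapunov A Ainv) {x : Euc d} (hx : x ≠ 0) {n m : ℕ} (hmn : m < n)
    {c : ℝ} (h : c ≤ lam A n m x) :
    Real.exp (c * ((n:ℝ)-(m:ℝ))) * ‖sol A m x‖ ≤ ‖sol A n x‖ := by
  rw [sol_norm_eq hA hx hmn (m := m)]
  have hk := cast_sub_pos hmn
  exact mul_le_mul_of_nonneg_right
    (Real.exp_le_exp.mpr (mul_le_mul_of_nonneg_right h hk.le)) (norm_nonneg _)

lemma sol_le_of_lam (hA : IsLyapunov A Ainv) {x : Euc d} (hx : x ≠ 0) {n m : ℕ} (hmn : m < n)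
    {c : ℝ} (h : lam A n m x ≤ c) :
    ‖sol A n x‖ ≤ Real.exp (c * ((n:ℝ)-(m:ℝ))) * ‖sol A m x‖ := by
  rw [sol_norm_eq hA hx hmn (m := m)]
  have hk := cast_sub_pos hmn
  exact mul_le_mul_of_nonneg_right
    (Real.exp_le_exp.mpr (mul_le_mul_of_nonneg_right h hk.le)) (norm_nonneg _)

lemma exp_logC_pow {n m : ℕ} (hmn : m < n) :
    Real.exp (Real.log (cst A Ainv) * ((n:ℝ)-(m:ℝ))) = (cst A Ainv)^(n-m) := by
  have h1 : ((n:ℝ)-(m:ℝ)) = ((n-m : ℕ) : ℝ) := by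
    rw [Nat.cast_sub hmn.le]
  rw [h1, mul_comm, Real.exp_nat_mul, Real.exp_log (cst_pos (A := A) (Ainv := Ainv))]

lemma lam_le_logC (hA : IsLyapunov A Ainv) {x : Euc d} (hx : x ≠ 0) {n m : ℕ} (hmn : m < n) :
    lam A n m x ≤ Real.log (cst A Ainv) := by
  apply lam_le_of hA hx hmn
  rw [exp_logC_pow hmn]
  have := norm_sol_le hA m (n - m) x
  rwa [Nat.add_sub_cancel' hmn.le] at this

lemma neg_logC_le_lam (hA : IsLyapunov A Ainv) {x : Euc d} (hx : x ≠ 0) {n m : ℕ} (hmn : m < n) :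
    -Real.log (cst A Ainv) ≤ lam A n m x := by
  apply lam_ge_of hA hx hmn
  have hC := cst_pos (A := A) (Ainv := Ainv)
  have hexp : Real.exp (-Real.log (cst A Ainv) * ((n:ℝ)-(m:ℝ)))
      = ((cst A Ainv)^(n-m))⁻¹ := by
    rw [show -Real.log (cst A Ainv) * ((n:ℝ)-(m:ℝ))
        = -(Real.log (cst A Ainv) * ((n:ℝ)-(m:ℝ))) by ring,
      Real.exp_neg, exp_logC_pow hmn]
  rw [hexp]
  have h2 := norm_sol_ge hA m (n-m) x
  rw [Nat.add_sub_cancel' hmn.le] at h2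
  have hp : (0:ℝ) < (cst A Ainv)^(n-m) := pow_pos hC _
  rw [inv_mul_le_iff₀ hp]
  exact h2

lemma lamSet_nonempty (A : ℕ → (Euc d →L[ℝ] Euc d)) (N : ℕ) (x : Euc d) :
    {r | ∃ n m : ℕ, N < n - m ∧ r = lam A n m x}.Nonempty :=
  ⟨lam A (N+1) 0 x, ⟨N+1, 0, by omega, rfl⟩⟩

lemma lamSet_bddBelow (hA : IsLyapunov A Ainv) {x : Euc d} (hx : x ≠ 0) (N : ℕ) :
    BddBelow {r | ∃ n m : ℕ, N < n - m ∧ r = lam A n m x} := by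
  refine ⟨-Real.log (cst A Ainv), ?_⟩
  rintro r ⟨n, m, hnm, rfl⟩
  exact neg_logC_le_lam hA hx (by omega)

lemma lamSet_bddAbove (hA : IsLyapunov A Ainv) {x : Euc d} (hx : x ≠ 0) (N : ℕ) :
    BddAbove {r | ∃ n m : ℕ, N < n - m ∧ r = lam A n m x} := by
  refine ⟨Real.log (cst A Ainv), ?_⟩
  rintro r ⟨n, m, hnm, rfl⟩
  exact lam_le_logC hA hx (by omega)

lemma lowerBohlVec_ge (hA : IsLyapunov A Ainv) {x : Euc d} (hx : x ≠ 0) {c : ℝ} (N : ℕ)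
    (h : ∀ n m : ℕ, N < n - m → c ≤ lam A n m x) : c ≤ lowerBohlVec A x := by
  have h1 : c ≤ sInf {r | ∃ n m : ℕ, N < n - m ∧ r = lam A n m x} := by
    apply le_csInf (lamSet_nonempty A N x)
    rintro r ⟨n, m, hnm, rfl⟩
    exact h n m hnm
  refine le_trans h1 ?_
  apply le_ciSup (f := fun N : ℕ => sInf {r | ∃ n m : ℕ, N < n - m ∧ r = lam A n m x})
  refine ⟨Real.log (cst A Ainv), ?_⟩
  rintro _ ⟨N', rfl⟩
  exact csInf_le_of_le (lamSet_bddBelow hA hx N') ⟨N'+1, 0, by omega, rfl⟩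
    (lam_le_logC hA hx (by omega))

lemma lt_lowerBohlVec_elim (hA : IsLyapunov A Ainv) {x : Euc d} (hx : x ≠ 0) {c : ℝ}
    (h : c < lowerBohlVec A x) :
    ∃ N : ℕ, ∀ n m : ℕ, N < n - m → c ≤ lam A n m x := by
  unfold lowerBohlVec at h
  obtain ⟨N, hN⟩ := exists_lt_of_lt_ciSup h
  refine ⟨N, fun n m hnm => le_of_lt (lt_of_lt_of_le hN ?_)⟩
  exact csInf_le (lamSet_bddBelow hA hx N) ⟨n, m, hnm, rfl⟩

lemma upperBohlVec_elim (hA : IsLyapunov A Ainv) {x : Euc d} (hx : x ≠ 0)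
    (h : upperBohlVec A x < 0) :
    ∃ (N : ℕ) (α : ℝ), α < 0 ∧ ∀ n m : ℕ, N < n - m → lam A n m x ≤ α := by
  unfold upperBohlVec at h
  obtain ⟨N, hN⟩ := exists_lt_of_ciInf_lt h
  exact ⟨N, _, hN, fun n m hnm => le_csSup (lamSet_bddAbove hA hx N) ⟨n, m, hnm, rfl⟩⟩

end BohlAux
set_option maxHeartbeats 1000000 in
theorem stmt9 {d : ℕ} (A Ainv : ℕ → (Euc d →L[ℝ] Euc d)) (hA : IsLyapunov A Ainv)
    (x₀ x₁ : Euc d) (hx₀ : x₀ ≠ 0)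
    (h₀ : 0 < lowerBohlVec A x₀) (h₁ : x₁ = 0 ∨ upperBohlVec A x₁ < 0) :
    lowerBohlVec A x₀ ≤ lowerBohlVec A (x₀ + x₁) := by
  classical
  by_cases hx₁ : x₁ = 0
  · simp [hx₁]
  replace h₁ : upperBohlVec A x₁ < 0 := h₁.resolve_left hx₁
  set C := BohlAux.cst A Ainv with hCdef
  have hCpos : (0:ℝ) < C := BohlAux.cst_pos
  have hC1 : (1:ℝ) ≤ C := BohlAux.one_le_cst
  set β := lowerBohlVec A x₀ with hβdef
  have hβpos : 0 < β := h₀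
  apply le_of_forall_sub_le
  intro ε hε
  set ε' := min (ε/2) (β/2) with hε'def
  have hε'pos : 0 < ε' := lt_min (by linarith) (by linarith)
  have hε'le : ε' ≤ ε/2 := min_le_left _ _
  have hε'le2 : ε' ≤ β/2 := min_le_right _ _
  set β' := β - ε' with hβ'def
  have hβ'pos : 0 < β' := by simp only [hβ'def]; linarith
  have hβ'lt : β' < β := by simp only [hβ'def]; linarith
  -- step 1: lower estimate for x₀
  obtain ⟨N₀, h0⟩ := BohlAux.lt_lowerBohlVec_elim hA hx₀ hβ'lt
  -- step 2: upper estimate for x₁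
  obtain ⟨N₁, α, hα, h1⟩ := BohlAux.upperBohlVec_elim hA hx₁ h₁
  have hx₀p : 0 < ‖x₀‖ := norm_pos_iff.mpr hx₀
  have hx₁p : 0 < ‖x₁‖ := norm_pos_iff.mpr hx₁
  -- pointwise versions from time 0
  have h0' : ∀ n : ℕ, N₀ < n → Real.exp (β' * (n:ℝ)) * ‖x₀‖ ≤ ‖sol A n x₀‖ := by
    intro n hn
    have hmn : (0:ℕ) < n := by omega
    have := BohlAux.sol_ge_of_lam hA hx₀ hmn (h0 n 0 (by omega))
    simpa [sol, fwd] using this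
  have h1' : ∀ n : ℕ, N₁ < n → ‖sol A n x₁‖ ≤ Real.exp (α * (n:ℝ)) * ‖x₁‖ := by
    intro n hn
    have hmn : (0:ℕ) < n := by omega
    have := BohlAux.sol_le_of_lam hA hx₁ hmn (h1 n 0 (by omega))
    simpa [sol, fwd] using this
  -- step 4: eventual domination
  have hd : α - β' < 0 := by linarith
  have htend : Filter.Tendsto (fun n : ℕ => (Real.exp (α - β'))^n) Filter.atTop (nhds 0) :=
    tendsto_pow_atTop_nhds_zero_of_lt_one (Real.exp_pos _).le (Real.exp_lt_one_iff.mpr hd)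
  have hδ : (0:ℝ) < ‖x₀‖ / (2 * ‖x₁‖) := div_pos hx₀p (by linarith)
  obtain ⟨N₂', hN₂'⟩ := Filter.eventually_atTop.mp (htend.eventually_lt_const hδ)
  set N₂ := max N₂' (max N₀ N₁ + 1) with hN₂def
  have hN₂0 : N₀ < N₂ := lt_of_lt_of_le (by omega) (le_max_right _ _)
  have hN₂1 : N₁ < N₂ := lt_of_lt_of_le (by omega) (le_max_right _ _)
  have h2 : ∀ n : ℕ, N₂ ≤ n → ‖sol A n x₁‖ ≤ (1/2) * ‖sol A n x₀‖ := by
    intro n hn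
    have hn0 : N₀ < n := lt_of_lt_of_le hN₂0 hn
    have hn1 : N₁ < n := lt_of_lt_of_le hN₂1 hn
    have e1 := h1' n hn1
    have e2 := h0' n hn0
    have e3 : (Real.exp (α - β'))^n < ‖x₀‖ / (2 * ‖x₁‖) :=
      hN₂' n (le_trans (le_max_left _ _) hn)
    have e4 : Real.exp (α * (n:ℝ)) = (Real.exp (α - β'))^n * Real.exp (β' * (n:ℝ)) := by
      rw [← Real.exp_nat_mul, ← Real.exp_add]
      ring_nf
    have e5 : (0:ℝ) < Real.exp (β' * (n:ℝ)) := Real.exp_pos _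
    calc ‖sol A n x₁‖ ≤ Real.exp (α * (n:ℝ)) * ‖x₁‖ := e1
      _ = ((Real.exp (α - β'))^n * ‖x₁‖) * Real.exp (β' * (n:ℝ)) := by rw [e4]; ring
      _ ≤ ((‖x₀‖ / (2 * ‖x₁‖)) * ‖x₁‖) * Real.exp (β' * (n:ℝ)) := by
          apply mul_le_mul_of_nonneg_right _ e5.le
          exact mul_le_mul_of_nonneg_right e3.le hx₁p.le
      _ = (1/2) * (Real.exp (β' * (n:ℝ)) * ‖x₀‖) := by field_simp
      _ ≤ (1/2) * ‖sol A n x₀‖ := by linarith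
  -- step 5: comparison for the sum
  set y := x₀ + x₁ with hydef
  have hsols : ∀ n : ℕ, sol A n y = sol A n x₀ + sol A n x₁ := fun n => map_add _ _ _
  have h2lo : ∀ n : ℕ, N₂ ≤ n → (1/2) * ‖sol A n x₀‖ ≤ ‖sol A n y‖ := by
    intro n hn
    have hh := h2 n hn
    have ht : ‖sol A n x₀‖ ≤ ‖sol A n y‖ + ‖sol A n x₁‖ := by
      have heq : sol A n x₀ = sol A n y - sol A n x₁ := by rw [hsols]; abel
      rw [heq]
      exact norm_sub_le _ _
    linarith
  have h2hi : ∀ n : ℕ, N₂ ≤ n → ‖sol A n y‖ ≤ (3/2) * ‖sol A n x₀‖ := by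
    intro n hn
    have hh := h2 n hn
    have ht : ‖sol A n y‖ ≤ ‖sol A n x₀‖ + ‖sol A n x₁‖ := by
      rw [hsols]; exact norm_add_le _ _
    linarith
  have hyne : y ≠ 0 := by
    intro h
    have h3 := h2lo N₂ le_rfl
    have h4 : sol A N₂ y = 0 := by rw [h]; exact map_zero _
    rw [h4, norm_zero] at h3
    have := BohlAux.norm_sol_pos hA N₂ hx₀
    linarith
  have hyp : 0 < ‖y‖ := norm_pos_iff.mpr hyne
  -- step 6: constants
  set Q := ‖x₀‖ / (2 * C^N₂ * ‖y‖) with hQdef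
  have hCN : (0:ℝ) < C^N₂ := pow_pos hCpos _
  have h2C : (0:ℝ) < 2 * C^N₂ * ‖y‖ := mul_pos (mul_pos two_pos hCN) hyp
  have hQpos : 0 < Q := div_pos hx₀p h2C
  set D := Real.log 3 + |Real.log Q| with hDdef
  have hlog3 : (0:ℝ) ≤ Real.log 3 := Real.log_nonneg (by norm_num)
  have hD3 : Real.log 3 ≤ D := le_add_of_nonneg_right (abs_nonneg _)
  have hDQ : -Real.log Q ≤ D := by
    have := neg_abs_le (Real.log Q)
    simp only [hDdef]
    linarith
  obtain ⟨N₃, hN₃⟩ := exists_nat_ge (2*D/ε)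
  clear_value D Q N₂ y β' ε' β C
  -- final: show β - ε ≤ lowerBohlVec A y using window N
  apply BohlAux.lowerBohlVec_ge hA hyne (N₀ + N₁ + N₂ + N₃ + 1)
  intro n m hnm
  have hmn : m < n := by omega
  have hk0 : (0:ℝ) < (n:ℝ) - (m:ℝ) := BohlAux.cast_sub_pos hmn
  have hkN₃ : (N₃:ℝ) ≤ (n:ℝ) - (m:ℝ) := by
    have hnat : m + N₃ ≤ n := by omega
    have : (m:ℝ) + (N₃:ℝ) ≤ (n:ℝ) := by exact_mod_cast hnat
    linarith
  have hεk : 2*D ≤ ε * ((n:ℝ) - (m:ℝ)) := by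
    have h5 : 2*D/ε ≤ (n:ℝ) - (m:ℝ) := le_trans hN₃ hkN₃
    calc 2*D = (2*D/ε) * ε := by field_simp
      _ ≤ ((n:ℝ) - (m:ℝ)) * ε := mul_le_mul_of_nonneg_right h5 hε.le
      _ = ε * ((n:ℝ) - (m:ℝ)) := by ring
  have hkey : Real.exp ((β - ε) * ((n:ℝ) - (m:ℝ)))
      ≤ Real.exp (-D) * Real.exp (β' * ((n:ℝ) - (m:ℝ))) := by
    rw [← Real.exp_add]
    apply Real.exp_le_exp.mpr
    have h6 : β - ε - β' ≤ -ε/2 := by simp only [hβ'def]; linarith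
    have h7 : (β - ε - β') * ((n:ℝ) - (m:ℝ)) ≤ (-ε/2) * ((n:ℝ) - (m:ℝ)) :=
      mul_le_mul_of_nonneg_right h6 hk0.le
    have h8 : (β - ε) * ((n:ℝ) - (m:ℝ))
        = (β - ε - β') * ((n:ℝ) - (m:ℝ)) + β' * ((n:ℝ) - (m:ℝ)) := by ring
    linarith [h7, hεk, h8]
  by_cases hm2 : N₂ ≤ m
  · -- case m ≥ N₂
    apply BohlAux.lam_ge_of hA hyne hmn
    have hn2 : N₂ ≤ n := le_trans hm2 hmn.le
    have A1 := h2lo n hn2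
    have A2 := h2hi m hm2
    have A3 : Real.exp (β' * ((n:ℝ) - (m:ℝ))) * ‖sol A m x₀‖ ≤ ‖sol A n x₀‖ :=
      BohlAux.sol_ge_of_lam hA hx₀ hmn (h0 n m (by omega))
    have hD3' : Real.exp (-D) ≤ 1/3 := by
      calc Real.exp (-D) ≤ Real.exp (-(Real.log 3)) := Real.exp_le_exp.mpr (by linarith)
        _ = 1/3 := by rw [Real.exp_neg, Real.exp_log (by norm_num : (0:ℝ) < 3)]; norm_num
    have e5 : (0:ℝ) < Real.exp (β' * ((n:ℝ) - (m:ℝ))) := Real.exp_pos _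
    calc Real.exp ((β - ε) * ((n:ℝ) - (m:ℝ))) * ‖sol A m y‖
        ≤ (Real.exp (-D) * Real.exp (β' * ((n:ℝ) - (m:ℝ)))) * ((3/2) * ‖sol A m x₀‖) :=
          mul_le_mul hkey A2 (norm_nonneg _)
            (mul_nonneg (Real.exp_pos _).le (Real.exp_pos _).le)
      _ ≤ ((1/3) * Real.exp (β' * ((n:ℝ) - (m:ℝ)))) * ((3/2) * ‖sol A m x₀‖) := by
          apply mul_le_mul_of_nonneg_right _ (by nlinarith [norm_nonneg (sol A m x₀)])
          exact mul_le_mul_of_nonneg_right hD3' e5.le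
      _ = (1/2) * (Real.exp (β' * ((n:ℝ) - (m:ℝ))) * ‖sol A m x₀‖) := by ring
      _ ≤ (1/2) * ‖sol A n x₀‖ := by linarith
      _ ≤ ‖sol A n y‖ := A1
  · -- case m < N₂
    push_neg at hm2
    apply BohlAux.lam_ge_of hA hyne hmn
    have hn2 : N₂ ≤ n := by omega
    have hnN₀ : N₀ < n := by omega
    have B1 : ‖sol A m y‖ ≤ C^N₂ * ‖y‖ := by
      have hb := BohlAux.norm_sol_le hA 0 m y
      rw [Nat.zero_add] at hb
      have hpow : C^m ≤ C^N₂ := pow_le_pow_right₀ hC1 hm2.le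
      have hsol0 : sol A 0 y = y := rfl
      rw [hsol0, ← hCdef] at hb
      calc ‖sol A m y‖ ≤ C^m * ‖y‖ := hb
        _ ≤ C^N₂ * ‖y‖ := mul_le_mul_of_nonneg_right hpow (norm_nonneg _)
    have B2 : (1/2) * (Real.exp (β' * (n:ℝ)) * ‖x₀‖) ≤ ‖sol A n y‖ :=
      le_trans (mul_le_mul_of_nonneg_left (h0' n hnN₀) (by norm_num)) (h2lo n hn2)
    have B3 : Real.exp (β' * ((n:ℝ) - (m:ℝ))) ≤ Real.exp (β' * (n:ℝ)) := by
      apply Real.exp_le_exp.mpr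
      apply mul_le_mul_of_nonneg_left _ hβ'pos.le
      have : (0:ℝ) ≤ (m:ℝ) := Nat.cast_nonneg _
      linarith
    have hexpQ : Real.exp (-D) ≤ Q := by
      calc Real.exp (-D) ≤ Real.exp (Real.log Q) := Real.exp_le_exp.mpr (by linarith)
        _ = Q := Real.exp_log hQpos
    calc Real.exp ((β - ε) * ((n:ℝ) - (m:ℝ))) * ‖sol A m y‖
        ≤ (Real.exp (-D) * Real.exp (β' * ((n:ℝ) - (m:ℝ)))) * (C^N₂ * ‖y‖) :=
          mul_le_mul hkey B1 (norm_nonneg _)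
            (mul_nonneg (Real.exp_pos _).le (Real.exp_pos _).le)
      _ ≤ (Q * Real.exp (β' * (n:ℝ))) * (C^N₂ * ‖y‖) := by
          apply mul_le_mul_of_nonneg_right _ (mul_nonneg hCN.le (norm_nonneg _))
          exact mul_le_mul hexpQ B3 (Real.exp_pos _).le hQpos.le
      _ = (1/2) * (Real.exp (β' * (n:ℝ)) * ‖x₀‖) := by
          rw [hQdef]
          have hCN0 : C^N₂ ≠ 0 := hCN.ne'
          have hy0 : ‖y‖ ≠ 0 := hyp.ne'
          field_simp
      _ ≤ ‖sol A n y‖ := B2
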